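/- Let J be an ideal of S = K[x_1,...,x_n] with a fixed monomial order, and let f ∈ S be a nonzero polynomial that is a nonzerodivisor on S/J. Then in(J + (f)) = in(J) + (in(f)) if and only if the monomial in(f) is a nonzerodivisor on S/in(J). -/

import Mathlib

open MvPolynomial

variable {K : Type*} [Field K] {n : ℕ}

/-- The leading monomial (exponent vector) of a polynomial with respect to a monomial
order `m`: the maximum of the support; by convention `lm m 0 = 0`. -/
noncomputable def lm (m : MonomialOrder (Fin n)) (f : MvPolynomial (Fin n) K) :
    Fin n →₀ ℕ :=
  m.toSyn.symm (f.support.sup fun d => m.toSyn d)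

/-- The initial ideal of `I`: the ideal generated by the leading monomials of the
nonzero elements of `I`. -/
noncomputable def initialIdeal (m : MonomialOrder (Fin n))
    (I : Ideal (MvPolynomial (Fin n) K)) : Ideal (MvPolynomial (Fin n) K) :=
  Ideal.span {p | ∃ f ∈ I, f ≠ 0 ∧ p = monomial (lm m f) (1 : K)}

/-- `G` is a Gröbner basis of `I`: a finite set of nonzero polynomials generating `I`
whose leading monomials generate the initial ideal of `I`. -/
def IsGroebnerBasis (m : MonomialOrder (Fin n)) (I : Ideal (MvPolynomial (Fin n) K))
    (G : Set (MvPolynomial (Fin n) K)) : Prop :=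
  G.Finite ∧ (0 : MvPolynomial (Fin n) K) ∉ G ∧ Ideal.span G = I ∧
    Ideal.span ((fun g => monomial (lm m g) (1 : K)) '' G) = initialIdeal m I

/-- The S-polynomial `S(f,g)` with respect to the monomial order `m`. -/
noncomputable def sPoly (m : MonomialOrder (Fin n)) (f g : MvPolynomial (Fin n) K) :
    MvPolynomial (Fin n) K :=
  monomial (lm m f ⊔ lm m g - lm m f) (f.coeff (lm m f))⁻¹ * f -
    monomial (lm m f ⊔ lm m g - lm m g) (g.coeff (lm m g))⁻¹ * g

/-- An ideal is a monomial ideal if it is generated by monomials. -/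
def IsMonomialIdeal (I : Ideal (MvPolynomial (Fin n) K)) : Prop :=
  ∃ M : Set (Fin n →₀ ℕ), I = Ideal.span ((fun μ => (monomial μ (1 : K))) '' M)

section API
variable (m : MonomialOrder (Fin n))

lemma toSyn_lm (f : MvPolynomial (Fin n) K) :
    m.toSyn (lm m f) = f.support.sup fun d => m.toSyn d := by
  simp [lm]

lemma lm_mem_support {f : MvPolynomial (Fin n) K} (hf : f ≠ 0) : lm m f ∈ f.support := by
  obtain ⟨b, hb, he⟩ := f.support.exists_mem_eq_sup (by
    simpa using hf) (fun d => m.toSyn d)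
  have : lm m f = b := by rw [lm, he, AddEquiv.symm_apply_apply]
  rwa [this]

lemma coeff_lm_ne_zero {f : MvPolynomial (Fin n) K} (hf : f ≠ 0) :
    f.coeff (lm m f) ≠ 0 := by
  simpa [mem_support_iff] using lm_mem_support m hf

lemma le_toSyn_lm {f : MvPolynomial (Fin n) K} {b : Fin n →₀ ℕ} (hb : b ∈ f.support) :
    m.toSyn b ≤ m.toSyn (lm m f) := by
  rw [toSyn_lm]; exact Finset.le_sup hb

lemma coeff_eq_zero_of_lm_lt {f : MvPolynomial (Fin n) K} {b : Fin n →₀ ℕ}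
    (h : m.toSyn (lm m f) < m.toSyn b) : f.coeff b = 0 := by
  by_contra hc
  exact absurd (le_toSyn_lm m (by simpa [mem_support_iff] using hc)) (not_le.mpr h)

lemma lm_eq_of {f : MvPolynomial (Fin n) K} {b : Fin n →₀ ℕ}
    (h1 : f.coeff b ≠ 0) (h2 : ∀ c ∈ f.support, m.toSyn c ≤ m.toSyn b) :
    lm m f = b := by
  apply m.toSyn.injective
  apply le_antisymm
  · rw [toSyn_lm]; exact Finset.sup_le h2
  · exact le_toSyn_lm m (by simpa [mem_support_iff] using h1)

lemma lm_monomial {a : Fin n →₀ ℕ} {c : K} (hc : c ≠ 0) :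
    lm m (monomial a c) = a := by
  apply lm_eq_of m (by simpa using hc)
  intro b hb
  rcases (Finset.mem_singleton.mp (by simpa [support_monomial, hc] using hb)) with rfl
  exact le_rfl

lemma lm_zero : lm m (0 : MvPolynomial (Fin n) K) = 0 := by
  simp [lm]

lemma lm_monomial_mul {j : MvPolynomial (Fin n) K} (hj : j ≠ 0) {δ : Fin n →₀ ℕ} {c : K}
    (hc : c ≠ 0) : lm m (monomial δ c * j) = δ + lm m j := by
  apply lm_eq_of m
  · rw [coeff_monomial_mul]
    exact mul_ne_zero hc (coeff_lm_ne_zero m hj)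
  · intro b hb
    classical
    obtain ⟨u, hu, v, hv, rfl⟩ := Finset.mem_add.mp (support_mul _ _ hb)
    have hu' : u = δ := by
      rcases (by simpa [support_monomial, hc] using hu : u ∈ ({δ} : Finset _)) with h
      simpa using h
    subst hu'
    rw [map_add, map_add]
    exact add_le_add_right (le_toSyn_lm m hv) _

lemma lm_mul {p q : MvPolynomial (Fin n) K} (hp : p ≠ 0) (hq : q ≠ 0) :
    lm m (p * q) = lm m p + lm m q := by
  classical
  apply lm_eq_of m
  · rw [coeff_mul]
    rw [Finset.sum_eq_single_of_mem (lm m p, lm m q) (Finset.HasAntidiagonal.mem_antidiagonal.mpr rfl)]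
    · exact mul_ne_zero (coeff_lm_ne_zero m hp) (coeff_lm_ne_zero m hq)
    · rintro ⟨u, v⟩ huv hne
      have hsum : u + v = lm m p + lm m q := Finset.HasAntidiagonal.mem_antidiagonal.mp huv
      by_contra hterm
      have hu : u ∈ p.support := by
        rw [mem_support_iff]; intro h; simp [h] at hterm
      have hv : v ∈ q.support := by
        rw [mem_support_iff]; intro h; simp [h] at hterm
      have h1 : m.toSyn u ≤ m.toSyn (lm m p) := le_toSyn_lm m hu
      have h2 : m.toSyn v ≤ m.toSyn (lm m q) := le_toSyn_lm m hv
      have h3 : m.toSyn u + m.toSyn v = m.toSyn (lm m p) + m.toSyn (lm m q) := by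
        rw [← map_add, ← map_add, hsum]
      have hu' : m.toSyn u = m.toSyn (lm m p) := le_antisymm h1 (by
        by_contra hlt
        have := add_lt_add_of_lt_of_le (lt_of_le_of_ne h1 (by
          intro h; exact hlt (le_of_eq h.symm))) h2
        rw [h3] at this; exact lt_irrefl _ this)
      have hv' : m.toSyn v = m.toSyn (lm m q) := by
        have := h3; rw [hu'] at this; exact add_left_cancel this
      exact hne (Prod.ext (m.toSyn.injective hu') (m.toSyn.injective hv'))
  · intro b hb
    classical
    obtain ⟨u, hu, v, hv, rfl⟩ := Finset.mem_add.mp (support_mul _ _ hb)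
    rw [map_add, map_add]
    exact add_le_add (le_toSyn_lm m hu) (le_toSyn_lm m hv)

lemma coeff_lm_mul {p q : MvPolynomial (Fin n) K} (hp : p ≠ 0) (hq : q ≠ 0) :
    (p * q).coeff (lm m p + lm m q) = p.coeff (lm m p) * q.coeff (lm m q) := by
  classical
  rw [coeff_mul]
  rw [Finset.sum_eq_single_of_mem (lm m p, lm m q) (Finset.HasAntidiagonal.mem_antidiagonal.mpr rfl)]
  · rintro ⟨u, v⟩ huv hne
    have hsum : u + v = lm m p + lm m q := Finset.HasAntidiagonal.mem_antidiagonal.mp huv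
    by_contra hterm
    have hu : u ∈ p.support := by
      rw [mem_support_iff]; intro h; simp [h] at hterm
    have hv : v ∈ q.support := by
      rw [mem_support_iff]; intro h; simp [h] at hterm
    have h1 : m.toSyn u ≤ m.toSyn (lm m p) := le_toSyn_lm m hu
    have h2 : m.toSyn v ≤ m.toSyn (lm m q) := le_toSyn_lm m hv
    have h3 : m.toSyn u + m.toSyn v = m.toSyn (lm m p) + m.toSyn (lm m q) := by
      rw [← map_add, ← map_add, hsum]
    have hu' : m.toSyn u = m.toSyn (lm m p) := le_antisymm h1 (by
      by_contra hlt
      have := add_lt_add_of_lt_of_le (lt_of_le_of_ne h1 (by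
        intro h; exact hlt (le_of_eq h.symm))) h2
      rw [h3] at this; exact lt_irrefl _ this)
    have hv' : m.toSyn v = m.toSyn (lm m q) := by
      have := h3; rw [hu'] at this; exact add_left_cancel this
    exact absurd (Prod.ext (m.toSyn.injective hu') (m.toSyn.injective hv')) hne

lemma lm_sub_lt {g : MvPolynomial (Fin n) K} {ν : Fin n →₀ ℕ}
    (hg : g ≠ 0) (hcoeff : g.coeff ν = 0)
    (hsupp : ∀ b ∈ g.support, m.toSyn b ≤ m.toSyn ν) :
    m.toSyn (lm m g) < m.toSyn ν := by
  rcases lt_or_eq_of_le (hsupp _ (lm_mem_support m hg)) with h | h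
  · exact h
  · exfalso; apply coeff_lm_ne_zero m hg; rw [m.toSyn.injective h]; exact hcoeff

end API

section Memb
variable (m : MonomialOrder (Fin n)) (I : Ideal (MvPolynomial (Fin n) K))

lemma initialIdeal_eq_span :
    initialIdeal m I =
      Ideal.span ((fun a => monomial a (1 : K)) '' {a | ∃ g ∈ I, g ≠ 0 ∧ lm m g = a}) := by
  unfold initialIdeal
  congr 1
  ext p
  constructor
  · rintro ⟨g, hg, h0, rfl⟩; exact ⟨lm m g, ⟨g, hg, h0, rfl⟩, rfl⟩
  · rintro ⟨a, ⟨g, hg, h0, rfl⟩, rfl⟩; exact ⟨g, hg, h0, rfl⟩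

lemma mem_initialIdeal_iff {p : MvPolynomial (Fin n) K} :
    p ∈ initialIdeal m I ↔ ∀ b ∈ p.support, ∃ g ∈ I, g ≠ 0 ∧ lm m g ≤ b := by
  rw [initialIdeal_eq_span, mem_ideal_span_monomial_image]
  constructor
  · intro h b hb
    obtain ⟨a, ⟨g, hg, h0, rfl⟩, hle⟩ := h b hb
    exact ⟨g, hg, h0, hle⟩
  · intro h b hb
    obtain ⟨g, hg, h0, hle⟩ := h b hb
    exact ⟨lm m g, ⟨g, hg, h0, rfl⟩, hle⟩

lemma monomial_lm_mem {g : MvPolynomial (Fin n) K} (hg : g ∈ I) (h0 : g ≠ 0) :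
    monomial (lm m g) (1 : K) ∈ initialIdeal m I :=
  Ideal.subset_span ⟨g, hg, h0, rfl⟩

lemma exists_lm_eq_coeff {ν : Fin n →₀ ℕ} (c : K) (hc : c ≠ 0)
    (h : ∃ g ∈ I, g ≠ 0 ∧ lm m g ≤ ν) :
    ∃ g ∈ I, g ≠ 0 ∧ lm m g = ν ∧ g.coeff ν = c := by
  obtain ⟨g₁, hg₁, h0, hle⟩ := h
  have hLC := coeff_lm_ne_zero m h0
  refine ⟨monomial (ν - lm m g₁) (c / g₁.coeff (lm m g₁)) * g₁,
    Ideal.mul_mem_left _ _ hg₁, ?_, ?_, ?_⟩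
  · intro h
    have := congrArg (fun q => MvPolynomial.coeff ((ν - lm m g₁) + lm m g₁) q) h
    simp only [coeff_monomial_mul, coeff_zero] at this
    exact (mul_ne_zero (div_ne_zero hc hLC) hLC) this
  · rw [lm_monomial_mul m h0 (div_ne_zero hc hLC), tsub_add_cancel_of_le hle]
  · nth_rewrite 1 [← tsub_add_cancel_of_le hle]
    rw [coeff_monomial_mul, div_mul_cancel₀ _ hLC]

lemma monomial_mem_initialIdeal_iff {ν : Fin n →₀ ℕ} :
    monomial ν (1 : K) ∈ initialIdeal m I ↔ ∃ g ∈ I, g ≠ 0 ∧ lm m g = ν := by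
  rw [mem_initialIdeal_iff]
  constructor
  · intro h
    obtain ⟨g, hg, h0, hle⟩ := h ν (by simp [support_monomial])
    obtain ⟨g', h1, h2, h3, _⟩ := exists_lm_eq_coeff m I (1 : K) one_ne_zero ⟨g, hg, h0, hle⟩
    exact ⟨g', h1, h2, h3⟩
  · rintro ⟨g, hg, h0, rfl⟩
    intro b hb
    rcases Finset.mem_singleton.mp (by simpa [support_monomial] using hb) with rfl
    exact ⟨g, hg, h0, le_rfl⟩

end Memb

section Quot

lemma smul_mk (I : Ideal (MvPolynomial (Fin n) K)) (x g : MvPolynomial (Fin n) K) :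
    x • (Ideal.Quotient.mk I g) = Ideal.Quotient.mk I (x * g) := by
  rw [← smul_eq_mul]
  show x • Submodule.Quotient.mk g = Submodule.Quotient.mk (x • g)
  exact (Submodule.Quotient.mk_smul I x g).symm

lemma isSMulRegular_quotient_iff {I : Ideal (MvPolynomial (Fin n) K)}
    {x : MvPolynomial (Fin n) K} :
    IsSMulRegular (MvPolynomial (Fin n) K ⧸ I) x ↔ ∀ g, x * g ∈ I → g ∈ I := by
  constructor
  · intro h g hg
    have h2 : x • (Ideal.Quotient.mk I g) = x • (Ideal.Quotient.mk I 0) := by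
      rw [smul_mk, smul_mk, mul_zero, Ideal.Quotient.eq]
      simpa using hg
    have := h h2
    rwa [Ideal.Quotient.eq, sub_zero] at this
  · intro h a b hab
    obtain ⟨ga, rfl⟩ := Ideal.Quotient.mk_surjective a
    obtain ⟨gb, rfl⟩ := Ideal.Quotient.mk_surjective b
    have hab' : x • (Ideal.Quotient.mk I ga) = x • (Ideal.Quotient.mk I gb) := hab
    rw [smul_mk, smul_mk, Ideal.Quotient.eq, ← mul_sub] at hab'
    rw [Ideal.Quotient.eq]
    exact h _ hab'

end Quot

section Key
variable (m : MonomialOrder (Fin n))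

lemma lm_add_of_lt {u v : MvPolynomial (Fin n) K} (hu : u ≠ 0)
    (hv : m.toSyn (lm m v) < m.toSyn (lm m u)) : lm m (u + v) = lm m u := by
  apply lm_eq_of m
  · rw [coeff_add, coeff_eq_zero_of_lm_lt m hv, add_zero]
    exact coeff_lm_ne_zero m hu
  · intro b hb
    classical
    rcases Finset.mem_union.mp (support_add hb) with h | h
    · exact le_toSyn_lm m h
    · exact (le_toSyn_lm m h).trans hv.le

lemma support_sub' {p q : MvPolynomial (Fin n) K} :
    (p - q).support ⊆ p.support ∪ q.support := by
  classical
  rw [sub_eq_add_neg]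
  refine support_add.trans ?_
  rw [support_neg]

lemma mem_sum_left {I I' : Ideal (MvPolynomial (Fin n) K)} {x : MvPolynomial (Fin n) K}
    (h : x ∈ I) : x ∈ I + I' := by
  rw [Submodule.add_eq_sup]; exact Submodule.mem_sup_left h

lemma mem_sum_right {I I' : Ideal (MvPolynomial (Fin n) K)} {x : MvPolynomial (Fin n) K}
    (h : x ∈ I') : x ∈ I + I' := by
  rw [Submodule.add_eq_sup]; exact Submodule.mem_sup_right h

lemma key_bwd (J : Ideal (MvPolynomial (Fin n) K))
    {f : MvPolynomial (Fin n) K} (hf : f ≠ 0)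
    (R : ∀ g, monomial (lm m f) (1 : K) * g ∈ initialIdeal m J → g ∈ initialIdeal m J)
    (s : m.syn) :
    ∀ p j g : MvPolynomial (Fin n) K, m.toSyn (lm m p) = s → j ∈ J → g = j + p * f →
      g ≠ 0 →
      monomial (lm m g) (1 : K) ∈ initialIdeal m J +
        Ideal.span {monomial (lm m f) (1 : K)} := by
  have wf : WellFounded ((· < ·) : m.syn → m.syn → Prop) := IsWellFounded.wf
  refine wf.induction
    (C := fun s => ∀ p j g : MvPolynomial (Fin n) K, m.toSyn (lm m p) = s → j ∈ J →
      g = j + p * f → g ≠ 0 →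
      monomial (lm m g) (1 : K) ∈ initialIdeal m J +
        Ideal.span {monomial (lm m f) (1 : K)}) s ?_
  clear s
  rintro s IH p j g rfl hj rfl hg0
  by_cases hp : p = 0
  · rw [hp, zero_mul, add_zero] at hg0 ⊢
    exact mem_sum_left (monomial_lm_mem m J hj hg0)
  · set ν := lm m p + lm m f with hν
    have hlmpf : lm m (p * f) = ν := lm_mul m hp hf
    have hcpf : (p * f).coeff ν = p.coeff (lm m p) * f.coeff (lm m f) := coeff_lm_mul m hp hf
    have hcpf0 : (p * f).coeff ν ≠ 0 := by
      rw [hcpf]; exact mul_ne_zero (coeff_lm_ne_zero m hp) (coeff_lm_ne_zero m hf)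
    rcases lt_or_ge (m.toSyn ν) (m.toSyn (lm m j)) with hA | hB
    · -- case A : lm j dominates
      have hj0 : j ≠ 0 := by
        intro h
        rw [h, lm_zero, map_zero] at hA
        exact absurd hA (by simpa using (bot_le : (⊥ : m.syn) ≤ m.toSyn ν).not_gt)
      have hlg : lm m (j + p * f) = lm m j :=
        lm_add_of_lt m hj0 (by rw [hlmpf]; exact hA)
      rw [hlg]
      exact mem_sum_left (monomial_lm_mem m J hj hj0)
    · -- case B
      have hsupp : ∀ b ∈ (j + p * f).support, m.toSyn b ≤ m.toSyn ν := by
        intro b hb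
        classical
        rcases Finset.mem_union.mp (support_add hb) with h | h
        · exact (le_toSyn_lm m h).trans hB
        · rw [← hlmpf]; exact le_toSyn_lm m h
      by_cases hc : (j + p * f).coeff ν = 0
      · -- B2 : cancellation at ν
        have hcj : j.coeff ν ≠ 0 := by
          intro h
          rw [coeff_add, h, zero_add] at hc
          exact hcpf0 hc
        have hj0 : j ≠ 0 := fun h => hcj (by simp [h])
        have hlmj : lm m j = ν :=
          m.toSyn.injective (le_antisymm hB (le_toSyn_lm m (by simpa [mem_support_iff] using hcj)))
        have hmem : monomial ν (1 : K) ∈ initialIdeal m J := by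
          rw [← hlmj]; exact monomial_lm_mem m J hj hj0
        have hmem2 : monomial (lm m p) (1 : K) ∈ initialIdeal m J := by
          apply R
          rw [monomial_mul, one_mul, add_comm]
          exact hmem
        have hex : ∃ g' ∈ J, g' ≠ 0 ∧ lm m g' ≤ lm m p := by
          rw [mem_initialIdeal_iff] at hmem2
          obtain ⟨g', h1, h2, h3⟩ := hmem2 (lm m p) (by simp [support_monomial])
          exact ⟨g', h1, h2, h3⟩
        obtain ⟨q, hqJ, hq0, hqlm, hqc⟩ :=
          exists_lm_eq_coeff m J (p.coeff (lm m p)) (coeff_lm_ne_zero m hp) hex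
        have hrepr : j + p * f = (j + q * f) + (p - q) * f := by ring
        have hj' : j + q * f ∈ J := J.add_mem hj (Ideal.mul_mem_right f J hqJ)
        by_cases hp'0 : p - q = 0
        · rw [hrepr, hp'0, zero_mul, add_zero] at hg0 ⊢
          exact mem_sum_left (monomial_lm_mem m J hj' hg0)
        · have hplt : m.toSyn (lm m (p - q)) < m.toSyn (lm m p) := by
            apply lm_sub_lt m hp'0
            · rw [coeff_sub, hqc, sub_self]
            · intro b hb
              classical
              rcases Finset.mem_union.mp (support_sub' hb) with h | h
              · exact le_toSyn_lm m h
              · rw [← hqlm]; exact le_toSyn_lm m h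
          rw [hrepr] at hg0 ⊢
          exact IH (m.toSyn (lm m (p - q))) hplt (p - q) (j + q * f) _ rfl hj' rfl hg0
      · -- B1 : top coefficient survives, divisible by lm f
        have hlg : lm m (j + p * f) = ν := lm_eq_of m hc hsupp
        rw [hlg]
        apply mem_sum_right
        rw [Ideal.mem_span_singleton']
        exact ⟨monomial (lm m p) 1, by rw [monomial_mul, one_mul]⟩

end Key

section Fwd
variable (m : MonomialOrder (Fin n))

lemma lm_neg (q : MvPolynomial (Fin n) K) : lm m (-q) = lm m q := by
  unfold lm
  rw [support_neg]

lemma monomial_mem_sum_cases (J : Ideal (MvPolynomial (Fin n) K)) {μ ν : Fin n →₀ ℕ}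
    (h : monomial ν (1 : K) ∈ initialIdeal m J + Ideal.span {monomial μ (1 : K)}) :
    (∃ g ∈ J, g ≠ 0 ∧ lm m g ≤ ν) ∨ μ ≤ ν := by
  have he : initialIdeal m J + Ideal.span {monomial μ (1 : K)} =
      Ideal.span ((fun a => monomial a (1 : K)) ''
        ({a | ∃ g ∈ J, g ≠ 0 ∧ lm m g = a} ∪ {μ})) := by
    rw [Set.image_union, Ideal.span_union, ← Submodule.add_eq_sup, initialIdeal_eq_span]
    congr 1
    rw [Set.image_singleton]
  rw [he, mem_ideal_span_monomial_image] at h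
  obtain ⟨a, ha, hle⟩ := h ν (by simp [support_monomial])
  rcases ha with ⟨g, hg, h0, rfl⟩ | ha
  · exact Or.inl ⟨g, hg, h0, hle⟩
  · rcases Set.mem_singleton_iff.mp ha with rfl
    exact Or.inr hle

lemma key_fwd (J : Ideal (MvPolynomial (Fin n) K)) {f : MvPolynomial (Fin n) K}
    (hf : f ≠ 0) (hreg : ∀ q, f * q ∈ J → q ∈ J)
    (E : initialIdeal m (J + Ideal.span {f}) =
      initialIdeal m J + Ideal.span {monomial (lm m f) (1 : K)})
    (s : m.syn) :
    ∀ g p j : MvPolynomial (Fin n) K, m.toSyn (lm m g) = s → j ∈ J → g = j + p * f →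
      p ≠ 0 → m.toSyn (lm m g) < m.toSyn (lm m p) + m.toSyn (lm m f) →
      monomial (lm m p) (1 : K) ∈ initialIdeal m J := by
  have wf : WellFounded ((· < ·) : m.syn → m.syn → Prop) := IsWellFounded.wf
  refine wf.induction
    (C := fun s => ∀ g p j : MvPolynomial (Fin n) K, m.toSyn (lm m g) = s → j ∈ J →
      g = j + p * f → p ≠ 0 → m.toSyn (lm m g) < m.toSyn (lm m p) + m.toSyn (lm m f) →
      monomial (lm m p) (1 : K) ∈ initialIdeal m J) s ?_
  clear s
  rintro s IH g p j rfl hj hgeq hp hinv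
  by_cases hg0 : g = 0
  · have hpf : p * f = -j := by
      rw [hg0] at hgeq
      linear_combination -hgeq
    have hpJ : p ∈ J := hreg p (by rw [mul_comm, hpf]; exact J.neg_mem hj)
    exact monomial_lm_mem m J hpJ hp
  · have hmem : monomial (lm m g) (1 : K) ∈ initialIdeal m (J + Ideal.span {f}) := by
      refine monomial_lm_mem m _ ?_ hg0
      rw [hgeq, Submodule.add_eq_sup]
      exact Submodule.add_mem _ (Submodule.mem_sup_left hj)
        (Submodule.mem_sup_right (Ideal.mem_span_singleton'.mpr ⟨p, rfl⟩))
    rw [E] at hmem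
    rcases monomial_mem_sum_cases m J hmem with hcase | hcase
    · obtain ⟨j', hj'J, hj'0, hj'lm, hj'c⟩ :=
        exists_lm_eq_coeff m J (g.coeff (lm m g)) (coeff_lm_ne_zero m hg0) hcase
      have hg'eq : g - j' = (j - j') + p * f := by rw [hgeq]; ring
      by_cases hg'0 : g - j' = 0
      · have hpf : p * f = j' - j := by
          rw [sub_eq_zero] at hg'0
          rw [hgeq] at hg'0
          linear_combination hg'0
        have hpJ : p ∈ J := hreg p (by rw [mul_comm, hpf]; exact J.sub_mem hj'J hj)
        exact monomial_lm_mem m J hpJ hp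
      · have hlt : m.toSyn (lm m (g - j')) < m.toSyn (lm m g) := by
          apply lm_sub_lt m hg'0
          · rw [coeff_sub, hj'c, sub_self]
          · intro b hb
            classical
            rcases Finset.mem_union.mp (support_sub' hb) with h | h
            · exact le_toSyn_lm m h
            · rw [← hj'lm]; exact le_toSyn_lm m h
        exact IH _ hlt (g - j') p (j - j') rfl (J.sub_mem hj hj'J) hg'eq hp (hlt.trans hinv)
    · -- lm f divides lm g
      have hτ : (lm m g - lm m f) + lm m f = lm m g := tsub_add_cancel_of_le hcase
      have hτlt : m.toSyn (lm m g - lm m f) < m.toSyn (lm m p) := by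
        have hsum : m.toSyn (lm m g - lm m f) + m.toSyn (lm m f) = m.toSyn (lm m g) := by
          rw [← map_add, hτ]
        by_contra h
        push_neg at h
        exact absurd hinv (not_lt.mpr (by rw [← hsum]; exact add_le_add_left h _))
      set c := g.coeff (lm m g) / f.coeff (lm m f) with hcdef
      have hc0 : c ≠ 0 := div_ne_zero (coeff_lm_ne_zero m hg0) (coeff_lm_ne_zero m hf)
      set q : MvPolynomial (Fin n) K := monomial (lm m g - lm m f) c with hqdef
      have hq0 : q ≠ 0 := by
        rw [hqdef, Ne, monomial_eq_zero]
        exact hc0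
      have hqlm : lm m q = lm m g - lm m f := lm_monomial m hc0
      have hqf_lm : lm m (q * f) = lm m g := by rw [lm_mul m hq0 hf, hqlm, hτ]
      have hqf_c : (q * f).coeff (lm m g) = g.coeff (lm m g) := by
        nth_rewrite 1 [← hτ]
        rw [hqdef, coeff_monomial_mul, div_mul_cancel₀ _ (coeff_lm_ne_zero m hf)]
      have hp'0 : p - q ≠ 0 := by
        intro h
        rw [sub_eq_zero] at h
        rw [h, hqlm] at hτlt
        exact lt_irrefl _ hτlt
      have hp'lm : lm m (p - q) = lm m p := by
        rw [sub_eq_add_neg]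
        exact lm_add_of_lt m hp (by rw [lm_neg, hqlm]; exact hτlt)
      have hg'eq : g - q * f = j + (p - q) * f := by rw [hgeq]; ring
      by_cases hg'0 : g - q * f = 0
      · have hpf : (p - q) * f = -j := by
          rw [sub_eq_zero] at hg'0
          rw [hgeq] at hg'0
          linear_combination hg'0
        have hpJ : p - q ∈ J := hreg _ (by rw [mul_comm, hpf]; exact J.neg_mem hj)
        have := monomial_lm_mem m J hpJ hp'0
        rwa [hp'lm] at this
      · have hlt : m.toSyn (lm m (g - q * f)) < m.toSyn (lm m g) := by
          apply lm_sub_lt m hg'0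
          · rw [coeff_sub, hqf_c, sub_self]
          · intro b hb
            classical
            rcases Finset.mem_union.mp (support_sub' hb) with h | h
            · exact le_toSyn_lm m h
            · rw [← hqf_lm]; exact le_toSyn_lm m h
        have hres := IH _ hlt (g - q * f) (p - q) j rfl hj hg'eq hp'0
          (by rw [hp'lm]; exact hlt.trans hinv)
        rwa [hp'lm] at hres

end Fwd

/-- For `f` a nonzero polynomial, regular on `S/J`:
`in(J + (f)) = in(J) + (in(f))` iff `in(f)` is regular on `S/in(J)`. -/
theorem stmt7 (m : MonomialOrder (Fin n)) (J : Ideal (MvPolynomial (Fin n) K))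
    (f : MvPolynomial (Fin n) K) (hf : f ≠ 0)
    (hreg : IsSMulRegular (MvPolynomial (Fin n) K ⧸ J) f) :
    initialIdeal m (J + Ideal.span {f}) =
        initialIdeal m J + Ideal.span {(monomial (lm m f) (1 : K))} ↔
      IsSMulRegular (MvPolynomial (Fin n) K ⧸ initialIdeal m J)
        ((monomial (lm m f) (1 : K)) : MvPolynomial (Fin n) K) := by
  have hfreg : ∀ q, f * q ∈ J → q ∈ J := fun q hq =>
    (isSMulRegular_quotient_iff.mp hreg) q hq
  constructor
  · intro E
    rw [isSMulRegular_quotient_iff]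
    intro g hg
    rw [mem_initialIdeal_iff] at hg ⊢
    intro b hb
    have hb' : (lm m f) + b ∈ (monomial (lm m f) (1 : K) * g).support := by
      rw [mem_support_iff, coeff_monomial_mul, one_mul]
      exact mem_support_iff.mp hb
    obtain ⟨j₁, hj₁J, hj₁0, hj₁le⟩ := hg _ hb'
    obtain ⟨j₀, hj₀J, hj₀0, hj₀lm, hj₀c⟩ := exists_lm_eq_coeff m J (f.coeff (lm m f))
      (coeff_lm_ne_zero m hf) ⟨j₁, hj₁J, hj₁0, hj₁le⟩
    set p0 : MvPolynomial (Fin n) K := monomial b (1 : K) with hp0def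
    have hp00 : p0 ≠ 0 := by rw [hp0def, Ne, monomial_eq_zero]; exact one_ne_zero
    have hp0lm : lm m p0 = b := lm_monomial m one_ne_zero
    by_cases h0 : p0 * f - j₀ = 0
    · have hpJ : p0 ∈ J := hfreg p0 (by
        rw [sub_eq_zero] at h0
        rw [mul_comm, h0]; exact hj₀J)
      exact ⟨p0, hpJ, hp00, by rw [hp0lm]⟩
    · have hpf_lm : lm m (p0 * f) = lm m f + b := by
        rw [lm_mul m hp00 hf, hp0lm, add_comm]
      have hpf_c : (p0 * f).coeff (lm m f + b) = f.coeff (lm m f) := by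
        rw [add_comm, hp0def, coeff_monomial_mul, one_mul]
      have hlt : m.toSyn (lm m (p0 * f - j₀)) < m.toSyn (lm m f + b) := by
        apply lm_sub_lt m h0
        · rw [coeff_sub, hpf_c, hj₀c, sub_self]
        · intro b' hb'
          classical
          rcases Finset.mem_union.mp (support_sub' hb') with h | h
          · rw [← hpf_lm]; exact le_toSyn_lm m h
          · rw [← hj₀lm]; exact le_toSyn_lm m h
      have hlt' : m.toSyn (lm m (p0 * f - j₀)) < m.toSyn (lm m p0) + m.toSyn (lm m f) := by
        rw [hp0lm]
        calc m.toSyn (lm m (p0 * f - j₀)) < m.toSyn (lm m f + b) := hlt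
        _ = m.toSyn b + m.toSyn (lm m f) := by rw [map_add, add_comm]
      have hkey := key_fwd m J hf hfreg E _ (p0 * f - j₀) p0 (-j₀) rfl (J.neg_mem hj₀J)
        (by ring) hp00 hlt'
      rw [hp0lm, mem_initialIdeal_iff] at hkey
      exact hkey b (by simp [support_monomial])
  · intro R
    have R' : ∀ g, monomial (lm m f) (1 : K) * g ∈ initialIdeal m J →
        g ∈ initialIdeal m J := isSMulRegular_quotient_iff.mp R
    apply le_antisymm
    · rw [initialIdeal, Ideal.span_le]
      rintro x ⟨g, hg, hg0, rfl⟩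
      rw [Submodule.add_eq_sup, Submodule.mem_sup] at hg
      obtain ⟨j, hj, z, hz, heq⟩ := hg
      rw [Ideal.mem_span_singleton'] at hz
      obtain ⟨p, rfl⟩ := hz
      subst heq
      exact key_bwd m J hf R' _ p j _ rfl hj rfl hg0
    · rw [Submodule.add_eq_sup, sup_le_iff]
      constructor
      · apply Ideal.span_mono
        rintro x ⟨g, hg, h0, rfl⟩
        exact ⟨g, mem_sum_left hg, h0, rfl⟩
      · rw [Ideal.span_le, Set.singleton_subset_iff]
        exact monomial_lm_mem m _ (mem_sum_right (Ideal.subset_span rfl)) hf
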